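/- There is no pointer list of the form [B, C, ..., C, B], i.e., no pointer list whose first entry equals its last entry and whose second entry equals its second-to-last entry (with length at least 4). -/
import Mathlib


/-- A finite sequence of integers (0-indexed list) is a *pointer list*:
(1) even positive length; (2) unique index of minimum absolute value;
(3) unique index of maximum absolute value; (4) each intermediate absolute
value occurs at exactly one other index; (5) for each even (0-based) index i,
x i ≤ x (i+1) and x i * x (i+1) > 0; (6) for each even (0-based) index i no
entry has absolute value strictly between |x i| and |x (i+1)|. -/
def IsPointerList (P : List ℤ) : Prop :=
  P.length % 2 = 0 ∧ 0 < P.length ∧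
  (∃! i, i < P.length ∧ ∀ j < P.length, |P.getD i 0| ≤ |P.getD j 0|) ∧
  (∃! i, i < P.length ∧ ∀ j < P.length, |P.getD j 0| ≤ |P.getD i 0|) ∧
  (∀ i < P.length, (∃ j < P.length, |P.getD j 0| < |P.getD i 0|) →
      (∃ j < P.length, |P.getD i 0| < |P.getD j 0|) →
      ∃! j, j < P.length ∧ j ≠ i ∧ |P.getD j 0| = |P.getD i 0|) ∧
  (∀ i, i % 2 = 0 → i + 1 < P.length →
      P.getD i 0 ≤ P.getD (i+1) 0 ∧ 0 < P.getD i 0 * P.getD (i+1) 0) ∧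
  (∀ i, i % 2 = 0 → i + 1 < P.length →
      ¬ ∃ j < P.length,
        (|P.getD i 0| < |P.getD j 0| ∧ |P.getD j 0| < |P.getD (i+1) 0|) ∨
        (|P.getD (i+1) 0| < |P.getD j 0| ∧ |P.getD j 0| < |P.getD i 0|))

-- Context directed excision: delete the first adjacent equal pair, if any.
open Classical in
noncomputable def cde (P : List ℤ) : List ℤ :=
  if h : ∃ i, i + 1 < P.length ∧ P.getD i 0 = P.getD (i+1) 0 then
    P.take (Nat.find h) ++ P.drop (Nat.find h + 2)
  else P

-- Context directed reversal: for the minimal i admitting j > i with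
-- x i = -(x j) (and the minimal such j), reverse and negate the segment
-- from position i+1 through j.
open Classical in
noncomputable def cdr (P : List ℤ) : List ℤ :=
  if h : ∃ i, ∃ j, i < j ∧ j < P.length ∧ P.getD i 0 = -(P.getD j 0) then
    let i := Nat.find h
    let j := Nat.find (Nat.find_spec h)
    P.take (i+1) ++ (((P.drop (i+1)).take (j - i)).reverse.map (fun z => -z)) ++
      P.drop (j+1)
  else P

-- Context directed block swap: for the lexicographically least (i, j)
-- admitting k, ℓ with i < j < k < ℓ, x i = x k, x j = x ℓ, interchange
-- the blocks x_{i+1}..x_{j-1} and x_k..x_ℓ.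
open Classical in
noncomputable def cds (P : List ℤ) : List ℤ :=
  if h : ∃ i, ∃ j, ∃ k, ∃ l, i < j ∧ j < k ∧ k < l ∧ l < P.length ∧
      P.getD i 0 = P.getD k 0 ∧ P.getD j 0 = P.getD l 0 then
    let i := Nat.find h
    let j := Nat.find (Nat.find_spec h)
    let k := Nat.find (Nat.find_spec (Nat.find_spec h))
    let l := Nat.find (Nat.find_spec (Nat.find_spec (Nat.find_spec h)))
    P.take (i+1) ++ ((P.drop k).take (l - k + 1)) ++ ((P.drop j).take (k - j)) ++
      ((P.drop (i+1)).take (j - i - 1)) ++ P.drop (l+1)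
  else P

/-- The doubling map π: each entry z is replaced by (z, z+1) if z > 0
and by (z-1, z) if z < 0. -/
def piMap (M : List ℤ) : List ℤ :=
  M.flatMap (fun z => if 0 < z then [z, z + 1] else [z - 1, z])

/-- One step of the HNS algorithm: apply cde if applicable, else cds if
applicable, else cdr. -/
noncomputable def hnsStep (P : List ℤ) : List ℤ :=
  if cde P ≠ P then cde P else if cds P ≠ P then cds P else cdr P

/-- no pointer list has the form [B, C, ..., C, B]. -/
theorem stmt2 (P : List ℤ) (hP : IsPointerList P) (hlen : 4 ≤ P.length)
    (h1 : P.getD 0 0 = P.getD (P.length - 1) 0)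
    (h2 : P.getD 1 0 = P.getD (P.length - 2) 0) :
    False := by
  obtain ⟨heven, hpos, hmin, hmax, hmid, h5, h6⟩ := hP
  set m := P.length with hm
  obtain ⟨hBC, -⟩ := h5 0 rfl (by omega)
  obtain ⟨hCB, -⟩ := h5 (m - 2) (by omega) (by omega)
  have hm2 : m - 2 + 1 = m - 1 := by omega
  rw [hm2, ← h1, ← h2] at hCB
  have hBC' : P.getD 0 0 = P.getD 1 0 := le_antisymm hBC hCB
  have e1 : |P.getD 1 0| = |P.getD 0 0| := by rw [hBC']
  have e2 : |P.getD (m-2) 0| = |P.getD 0 0| := by rw [← h2, hBC']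
  have e3 : |P.getD (m-1) 0| = |P.getD 0 0| := by rw [← h1]
  by_cases hlo : ∃ j < m, |P.getD j 0| < |P.getD 0 0|
  · by_cases hhi : ∃ j < m, |P.getD 0 0| < |P.getD j 0|
    · obtain ⟨j, -, hju⟩ := hmid 0 (by omega) hlo hhi
      have a1 := hju 1 ⟨by omega, by omega, e1⟩
      have a2 := hju (m-2) ⟨by omega, by omega, e2⟩
      omega
    · push_neg at hhi
      obtain ⟨i, -, hiu⟩ := hmax
      have a1 := hiu 0 ⟨by omega, fun j hj => hhi j hj⟩
      have a2 := hiu 1 ⟨by omega, fun j hj => e1 ▸ hhi j hj⟩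
      omega
  · push_neg at hlo
    obtain ⟨i, -, hiu⟩ := hmin
    have a1 := hiu 0 ⟨by omega, fun j hj => hlo j hj⟩
    have a2 := hiu 1 ⟨by omega, fun j hj => e1 ▸ hlo j hj⟩
    omega
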